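/- Let k be a field, W a k-vector space, and G a group acting on W by k-linear automorphisms; let G act diagonally on r-tuples. Let r ≥ 1, 1 ≤ d ≤ r, and let w = (w_1,…,w_r) ∈ W^r be such that w_j lies in the k-linear span of {w_1,…,w_d} for every j with d < j ≤ r. Then there exists a G-invariant k-linear subspace W_0 of W^r such that w ∈ W_0 and the k-linear projection p : W^r → W^d onto the first d coordinates restricts to a k-linear isomorphism from W_0 onto W^d. -/
import Mathlib


/-- (Lemma 4.8(b).) If `w = (w_1, …, w_r) ∈ W^r` is a tuple such that `w_j` lies in the
span of `w_1, …, w_d` for every `j > d`, then there is a `G`-invariant subspace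
`W₀ ⊆ W^r` containing `w` such that the projection onto the first `d` coordinates
restricts to a linear isomorphism `W₀ ≃ W^d`. -/
theorem luna_stmt8 (k W G : Type*) [Field k] [AddCommGroup W] [Module k W] [Group G]
    (ρ : Representation k G W) (r d : ℕ) (hr : 1 ≤ r) (hd : 1 ≤ d) (hdr : d ≤ r)
    (w : Fin r → W)
    (hspan : ∀ j : Fin r, d ≤ (j : ℕ) →
      w j ∈ Submodule.span k {x : W | ∃ i : Fin r, (i : ℕ) < d ∧ w i = x}) :
    ∃ W₀ : Submodule k (Fin r → W),
      (∀ g : G, ∀ x ∈ W₀, (fun i : Fin r => ρ g (x i)) ∈ W₀) ∧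
      w ∈ W₀ ∧
      ∃ e : W₀ ≃ₗ[k] (Fin d → W),
        ∀ x : W₀, e x = fun i : Fin d => (x : Fin r → W) (Fin.castLE hdr i) := by
  classical
  set v : Fin d → W := fun i => w (Fin.castLE hdr i) with hv
  have hset : {x : W | ∃ i : Fin r, (i : ℕ) < d ∧ w i = x} = Set.range v := by
    ext x
    constructor
    · rintro ⟨i, hi, rfl⟩
      exact ⟨⟨i, hi⟩, rfl⟩
    · rintro ⟨i, rfl⟩
      exact ⟨Fin.castLE hdr i, i.2, rfl⟩
  have hc : ∀ j : Fin r, ∃ c : Fin d → k, d ≤ (j : ℕ) → ∑ i, c i • v i = w j := by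
    intro j
    by_cases hj : d ≤ (j : ℕ)
    · have h := hspan j hj
      rw [hset, Submodule.mem_span_range_iff_exists_fun] at h
      obtain ⟨c, hcc⟩ := h
      exact ⟨c, fun _ => hcc⟩
    · exact ⟨0, fun h => absurd h hj⟩
  choose c hcspec using hc
  let T : (Fin d → W) →ₗ[k] (Fin r → W) :=
    { toFun := fun u j => if h : (j : ℕ) < d then u ⟨(j : ℕ), h⟩ else ∑ i, c j i • u i
      map_add' := by
        intro u u'
        funext j
        by_cases h : (j : ℕ) < d
        · simp [h]
        · simp [h, smul_add, Finset.sum_add_distrib]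
      map_smul' := by
        intro a u
        funext j
        by_cases h : (j : ℕ) < d
        · simp [h]
        · simp [h, Finset.smul_sum, smul_comm a] }
    
  have hT : ∀ u (i : Fin d), T u (Fin.castLE hdr i) = u i := by
    intro u i
    simp only [T, LinearMap.coe_mk, AddHom.coe_mk]
    rw [dif_pos (show ((Fin.castLE hdr i : Fin r) : ℕ) < d from i.2)]
    rfl
  refine ⟨LinearMap.range T, ?_, ?_, ?_⟩
  · rintro g x ⟨u, rfl⟩
    refine ⟨fun i => ρ g (u i), ?_⟩
    funext j
    by_cases h : (j : ℕ) < d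
    · simp [T, h]
    · simp [T, h, map_sum]
  · refine ⟨fun i => w (Fin.castLE hdr i), ?_⟩
    funext j
    by_cases h : (j : ℕ) < d
    · simp only [T, LinearMap.coe_mk, AddHom.coe_mk, dif_pos h]
      rfl
    · simp only [T, LinearMap.coe_mk, AddHom.coe_mk, dif_neg h]
      exact hcspec j (le_of_not_gt h)
  · let p : (Fin r → W) →ₗ[k] (Fin d → W) :=
      { toFun := fun x i => x (Fin.castLE hdr i)
        map_add' := fun _ _ => rfl
        map_smul' := fun _ _ => rfl }
    have hbij : Function.Bijective (p.comp (LinearMap.range T).subtype) := by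
      constructor
      · rintro ⟨x, u, rfl⟩ ⟨y, u', rfl⟩ hxy
        have : u = u' := by
          funext i
          have := congrFun hxy i
          simpa [p, hT] using this
        simp [this]
      · intro u
        refine ⟨⟨T u, u, rfl⟩, ?_⟩
        funext i
        simpa [p] using hT u i
    exact ⟨LinearEquiv.ofBijective _ hbij, fun x => rfl⟩
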